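/- The sequence {P_n^(1/n)}_{n≥1} is strictly increasing, i.e., for every integer n ≥ 1, (P_n)^(1/n) < (P_{n+1})^(1/(n+1)). -/

import Mathlib

theorem Pn_root_strict_mono (P : ℕ → ℝ)
    (hP0 : P 0 = 1) (hP1 : P 1 = 8)
    (hPrec : ∀ n : ℕ, 1 ≤ n →
      ((n : ℝ) + 1) ^ 2 * P (n + 1)
        = 8 * (3 * (n : ℝ) ^ 2 + 3 * (n : ℝ) + 1) * P n - 128 * (n : ℝ) ^ 2 * P (n - 1))
    (hPpos : ∀ n : ℕ, 0 < P n) :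
    ∀ n : ℕ, 1 ≤ n →
      P n ^ ((1 : ℝ) / (n : ℝ)) < P (n + 1) ^ ((1 : ℝ) / ((n : ℝ) + 1)) := by
  have hP2 : P 2 = 80 := by
    have h := hPrec 1 le_rfl
    norm_num [hP0, hP1] at h
    linarith
  -- Invariant: 8 ≤ P(n+1)/P n ≤ 16(n+1)/(n+2)
  have hInv : ∀ n : ℕ, 1 ≤ n →
      8 * P n ≤ P (n+1) ∧ ((n:ℝ)+2) * P (n+1) ≤ 16 * ((n:ℝ)+1) * P n := by
    intro n hn
    induction n, hn using Nat.le_induction with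
    | base => norm_num [hP1, hP2]
    | succ n hn ih =>
      obtain ⟨h8, hU⟩ := ih
      have h := hPrec (n+1) (by omega)
      simp only [Nat.add_sub_cancel] at h
      push_cast at h ⊢
      have hp := (hPpos n).le
      have hp1 := (hPpos (n+1)).le
      have hn0 : (0:ℝ) ≤ (n:ℝ) := Nat.cast_nonneg n
      have hA : (0:ℝ) ≤ P (n+1) - 8 * P n := by linarith
      have hB : (0:ℝ) ≤ 16 * ((n:ℝ)+1) * P n - ((n:ℝ)+2) * P (n+1) := by linarith
      constructor
      · nlinarith [mul_nonneg hn0 hA, mul_nonneg (mul_nonneg hn0 hn0) hA,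
          mul_nonneg hn0 hp, hPpos n]
      · nlinarith [mul_nonneg hn0 hB, mul_nonneg (mul_nonneg hn0 hn0) hB,
          mul_nonneg hn0 hp1, hPpos (n+1), mul_nonneg hn0 hp, hPpos n]
  -- log-convexity
  have hLC : ∀ n : ℕ, 1 ≤ n → P (n+1)^2 ≤ P n * P (n+2) := by
    intro n hn
    obtain ⟨h8, hU⟩ := hInv n hn
    have h := hPrec (n+1) (by omega)
    simp only [Nat.add_sub_cancel] at h
    push_cast at h
    have hp := (hPpos n).le
    have hn0 : (0:ℝ) ≤ (n:ℝ) := Nat.cast_nonneg n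
    have hA : (0:ℝ) ≤ P (n+1) - 8 * P n := by linarith
    have hB : (0:ℝ) ≤ 16 * ((n:ℝ)+1) * P n - ((n:ℝ)+2) * P (n+1) := by linarith
    have hpos : (0:ℝ) < ((n:ℝ)+2)^2 := by positivity
    have key2 : ((n:ℝ)+2)^2 * P (n+1)^2 ≤ ((n:ℝ)+2)^2 * (P n * P (n+2)) := by
      have e : ((n:ℝ)+2)^2 * (P n * P (n+2))
          = P n * (8 * (3*((n:ℝ)+1)^2 + 3*((n:ℝ)+1) + 1) * P (n+1)
              - 128 * ((n:ℝ)+1)^2 * P n) := by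
        rw [← h]; ring
      rw [e]
      nlinarith [mul_nonneg hA hB, mul_nonneg (mul_nonneg hn0 hA) hB,
        mul_nonneg (mul_nonneg (mul_nonneg hn0 hn0) hA) hB,
        mul_nonneg hp hB, mul_nonneg (mul_nonneg hn0 hp) hB,
        mul_nonneg hp hp, mul_nonneg (mul_nonneg hn0 hp) hp, hPpos n, hPpos (n+1)]
    exact (mul_le_mul_iff_right₀ hpos).mp key2
  -- P n ^ (n+1) < P (n+1) ^ n
  have key : ∀ n : ℕ, 1 ≤ n → P n ^ (n+1) < P (n+1) ^ n := by
    intro n hn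
    induction n, hn using Nat.le_induction with
    | base => norm_num [hP1, hP2]
    | succ n hn ih =>
      have hlc := hLC n hn
      have h1 : P (n+1) ^ (2*(n+1)) ≤ P n ^ (n+1) * P (n+2) ^ (n+1) := by
        rw [pow_mul, ← mul_pow]
        exact pow_le_pow_left₀ (sq_nonneg _) hlc (n+1)
      have h3 : P n ^ (n+1) * P (n+2) ^ (n+1) < P (n+1) ^ n * P (n+2) ^ (n+1) :=
        mul_lt_mul_of_pos_right ih (pow_pos (hPpos _) _)
      have h4 : P (n+1) ^ (2*(n+1)) = P (n+1) ^ (n+1+1) * P (n+1) ^ n := by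
        rw [← pow_add]; ring_nf
      have h5 : P (n+1) ^ (n+1+1) * P (n+1) ^ n < P (n+2) ^ (n+1) * P (n+1) ^ n := by
        rw [← h4]
        calc P (n+1) ^ (2*(n+1)) ≤ P n ^ (n+1) * P (n+2) ^ (n+1) := h1
          _ < P (n+1) ^ n * P (n+2) ^ (n+1) := h3
          _ = P (n+2) ^ (n+1) * P (n+1) ^ n := mul_comm _ _
      exact lt_of_mul_lt_mul_right h5 (pow_nonneg (hPpos _).le _)
  intro n hn
  have hp := hPpos n
  have hq := hPpos (n+1)
  have hk := key n hn
  have hn0 : (0:ℝ) < (n:ℝ) := by exact_mod_cast hn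
  have e1 : P n ^ ((1:ℝ)/(n:ℝ)) = (P n ^ (n+1)) ^ ((1:ℝ)/((n:ℝ)*((n:ℝ)+1))) := by
    rw [← Real.rpow_natCast (P n) (n+1), ← Real.rpow_mul hp.le]
    congr 1
    push_cast
    field_simp
  have e2 : P (n+1) ^ ((1:ℝ)/((n:ℝ)+1)) = (P (n+1) ^ n) ^ ((1:ℝ)/((n:ℝ)*((n:ℝ)+1))) := by
    rw [← Real.rpow_natCast (P (n+1)) n, ← Real.rpow_mul hq.le]
    congr 1
    field_simp
  rw [e1, e2]
  exact Real.rpow_lt_rpow (by positivity) hk (by positivity)
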